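/- Let G be obtained from cubic bridgeless graphs G_0, G_1, G_2 by the windmill construction, and fix i ∈ {0,1,2}. If the edge set of G can be covered by k perfect matchings each of which is of type 0 or type 1 on H_i, with at least one of them of type 0 on H_i, then the edge set of G_i can be covered by k perfect matchings. -/

import Mathlib

open SimpleGraph

/-- A graph is cubic (3-regular) if every vertex has exactly 3 neighbours. -/
def IsCubic {V : Type*} (G : SimpleGraph V) : Prop :=
  ∀ v : V, (G.neighborSet v).ncard = 3

/-- A graph is bridgeless if it has no cut-edge. -/
def IsBridgeless {V : Type*} (G : SimpleGraph V) : Prop :=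
  ∀ e : Sym2 V, ¬ G.IsBridge e

/-- The edge set of `G` can be covered by `k` perfect matchings. -/
def CoverByPM {V : Type*} (G : SimpleGraph V) (k : ℕ) : Prop :=
  ∃ M : Fin k → G.Subgraph,
    (∀ i, (M i).IsPerfectMatching) ∧ (⋃ i, (M i).edgeSet) = G.edgeSet

/-- The excessive index of `G`: the least number of perfect matchings needed to
cover the edge set of `G` (`⊤` if there is no such cover). -/
noncomputable def excessiveIndex {V : Type*} (G : SimpleGraph V) : ℕ∞ :=
  sInf {k : ℕ∞ | ∃ n : ℕ, k = n ∧ CoverByPM G n}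

/-- `G` has a proper edge colouring with `n` colours. -/
def ProperEdgeColorable {V : Type*} (G : SimpleGraph V) (n : ℕ) : Prop :=
  ∃ c : Sym2 V → Fin n, ∀ e ∈ G.edgeSet, ∀ f ∈ G.edgeSet,
    e ≠ f → (∃ v : V, v ∈ e ∧ v ∈ f) → c e ≠ c f

/-- The set of edges of `G` with one end-vertex in `A` and the other in `B`. -/
def edgesBetween {V : Type*} (G : SimpleGraph V) (A B : Set V) : Set (Sym2 V) :=
  {e | ∃ a b, G.Adj a b ∧ a ∈ A ∧ b ∈ B ∧ e = s(a, b)}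

/-- The set of edges of `G` with exactly one end-vertex in `A`. -/
def edgeBoundary {V : Type*} (G : SimpleGraph V) (A : Set V) : Set (Sym2 V) :=
  edgesBetween G A Aᶜ

/-- The subgraph induced on `A` contains a cycle. -/
def HasCycleOn {V : Type*} (G : SimpleGraph V) (A : Set V) : Prop :=
  ¬ (G.induce A).IsAcyclic

/-- `G` is cyclically `k`-edge-connected: there is no edge-cut with fewer than `k`
edges separating two parts each containing a cycle. -/
def CyclicallyEdgeConnected {V : Type*} (G : SimpleGraph V) (k : ℕ) : Prop :=
  ∀ A : Set V, HasCycleOn G A → HasCycleOn G Aᶜ → k ≤ (edgeBoundary G A).ncard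

/-- A snark: a cubic, cyclically 4-edge-connected graph of girth at least five
that is not 3-edge-colourable. -/
def IsSnark {V : Type*} (G : SimpleGraph V) : Prop :=
  IsCubic G ∧ CyclicallyEdgeConnected G 4 ∧ 5 ≤ G.girth ∧ ¬ ProperEdgeColorable G 3

/-- The data for the windmill construction: three graphs `G i`, each with a
distinguished edge `x i — y i`, where `x0 i, x1 i` are the two neighbours of
`x i` other than `y i`, and `y0 i, y1 i` the two neighbours of `y i` other
than `x i`. -/
structure WindmillData where
  V : Fin 3 → Type
  G : ∀ i, SimpleGraph (V i)
  x : ∀ i, V i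
  y : ∀ i, V i
  x0 : ∀ i, V i
  x1 : ∀ i, V i
  y0 : ∀ i, V i
  y1 : ∀ i, V i
  adj_xy : ∀ i, (G i).Adj (x i) (y i)
  adj_xx0 : ∀ i, (G i).Adj (x i) (x0 i)
  adj_xx1 : ∀ i, (G i).Adj (x i) (x1 i)
  adj_yy0 : ∀ i, (G i).Adj (y i) (y0 i)
  adj_yy1 : ∀ i, (G i).Adj (y i) (y1 i)
  x0_ne_x1 : ∀ i, x0 i ≠ x1 i
  y0_ne_y1 : ∀ i, y0 i ≠ y1 i
  x0_ne_y : ∀ i, x0 i ≠ y i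
  x1_ne_y : ∀ i, x1 i ≠ y i
  y0_ne_x : ∀ i, y0 i ≠ x i
  y1_ne_x : ∀ i, y1 i ≠ x i

namespace WindmillData

variable (D : WindmillData)

/-- The vertices of `H i = G i − {x i, y i}`. -/
def HVert (i : Fin 3) : Type := {v : D.V i // v ≠ D.x i ∧ v ≠ D.y i}

/-- The vertices of the windmill graph: the vertices of `H 0, H 1, H 2`,
the nine new vertices `a i, b i, c i` and the new vertex `u`. -/
def Vert : Type := (Σ i : Fin 3, D.HVert i) ⊕ ((Fin 3 × Fin 3) ⊕ Unit)

/-- A vertex of `H i`, as a vertex of the windmill graph. -/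
def hv {i : Fin 3} (v : D.HVert i) : D.Vert := Sum.inl ⟨i, v⟩
/-- The new vertex `a i`. -/
def av (i : Fin 3) : D.Vert := Sum.inr (Sum.inl (i, 0))
/-- The new vertex `b i`. -/
def bv (i : Fin 3) : D.Vert := Sum.inr (Sum.inl (i, 1))
/-- The new vertex `c i`. -/
def cv (i : Fin 3) : D.Vert := Sum.inr (Sum.inl (i, 2))
/-- The new vertex `u`. -/
def uv : D.Vert := Sum.inr (Sum.inr ())

/-- The vertex `x i ^ 0` of `H i`. -/
def x0v (i : Fin 3) : D.Vert := D.hv ⟨D.x0 i, (D.adj_xx0 i).ne', D.x0_ne_y i⟩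
/-- The vertex `x i ^ 1` of `H i`. -/
def x1v (i : Fin 3) : D.Vert := D.hv ⟨D.x1 i, (D.adj_xx1 i).ne', D.x1_ne_y i⟩
/-- The vertex `y i ^ 0` of `H i`. -/
def y0v (i : Fin 3) : D.Vert := D.hv ⟨D.y0 i, D.y0_ne_x i, (D.adj_yy0 i).ne'⟩
/-- The vertex `y i ^ 1` of `H i`. -/
def y1v (i : Fin 3) : D.Vert := D.hv ⟨D.y1 i, D.y1_ne_x i, (D.adj_yy1 i).ne'⟩

/-- The adjacency relation of the windmill construction: edges inside each `H i`;
`a i` joined to `x (i+1) ^ 0` and `y (i-1) ^ 0`; `b i` joined to `x (i+1) ^ 1`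
and `y (i-1) ^ 1`; and `c i` joined to `a i`, `b i` and `u`. -/
def rel : D.Vert → D.Vert → Prop := fun p q =>
  (∃ (i : Fin 3) (v w : D.HVert i), (D.G i).Adj v.1 w.1 ∧ p = D.hv v ∧ q = D.hv w) ∨
  (∃ i : Fin 3, p = D.av i ∧ q = D.x0v (i + 1)) ∨
  (∃ i : Fin 3, p = D.av i ∧ q = D.y0v (i - 1)) ∨
  (∃ i : Fin 3, p = D.bv i ∧ q = D.x1v (i + 1)) ∨
  (∃ i : Fin 3, p = D.bv i ∧ q = D.y1v (i - 1)) ∨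
  (∃ i : Fin 3, p = D.cv i ∧ (q = D.av i ∨ q = D.bv i ∨ q = D.uv))

/-- The graph obtained from `G 0, G 1, G 2` by the windmill construction. -/
def graph : SimpleGraph D.Vert := SimpleGraph.fromRel D.rel

/-- The set of vertices of `H i` inside the windmill graph. -/
def Hset (i : Fin 3) : Set D.Vert := {p | ∃ v : D.HVert i, p = D.hv v}

/-- The set `A i = {a i, b i, c i}`. -/
def Aset (i : Fin 3) : Set D.Vert := {D.av i, D.bv i, D.cv i}

/-- A set of edges is of type 0 on `H i` if it misses `∂ H i`. -/
def Type0On (M : Set (Sym2 D.Vert)) (i : Fin 3) : Prop :=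
  (M ∩ edgeBoundary D.graph (D.Hset i)).ncard = 0

/-- A set of edges is of type 1 on `H i` if it has exactly one edge to
`A (i-1)` and exactly one edge to `A (i+1)`. -/
def Type1On (M : Set (Sym2 D.Vert)) (i : Fin 3) : Prop :=
  (M ∩ edgesBetween D.graph (D.Hset i) (D.Aset (i - 1))).ncard = 1 ∧
  (M ∩ edgesBetween D.graph (D.Hset i) (D.Aset (i + 1))).ncard = 1

/-- A set of edges is of type 2 on `H i` if it has exactly two edges in
`∂ H i` but is not of type 1. -/
def Type2On (M : Set (Sym2 D.Vert)) (i : Fin 3) : Prop :=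
  (M ∩ edgeBoundary D.graph (D.Hset i)).ncard = 2 ∧ ¬ D.Type1On M i

/-- For `i ≠ j`, the edge connecting `H i` to `a j`. -/
def eEdge (i j : Fin 3) : Sym2 D.Vert :=
  if i = j + 1 then s(D.av j, D.x0v i) else s(D.av j, D.y0v i)

/-- For `i ≠ j`, the edge connecting `H i` to `b j`. -/
def fEdge (i j : Fin 3) : Sym2 D.Vert :=
  if i = j + 1 then s(D.bv j, D.x1v i) else s(D.bv j, D.y1v i)

end WindmillData

namespace WindmillData

variable (D : WindmillData)


@[simp] lemma hv_ne_av {i j : Fin 3} (v : D.HVert i) : D.hv v ≠ D.av j := by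
  intro h; exact Sum.inl_ne_inr h
@[simp] lemma hv_ne_bv {i j : Fin 3} (v : D.HVert i) : D.hv v ≠ D.bv j := by
  intro h; exact Sum.inl_ne_inr h
@[simp] lemma hv_ne_cv {i j : Fin 3} (v : D.HVert i) : D.hv v ≠ D.cv j := by
  intro h; exact Sum.inl_ne_inr h
@[simp] lemma hv_ne_uv {i : Fin 3} (v : D.HVert i) : D.hv v ≠ D.uv := by
  intro h; exact Sum.inl_ne_inr h
@[simp] lemma av_ne_bv {i j : Fin 3} : D.av i ≠ D.bv j := by
  intro h; injection h with h; injection h with h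
  have h2 : (0 : Fin 3) = 1 := (Prod.ext_iff.mp h).2
  exact absurd h2 (by decide)
@[simp] lemma av_ne_cv {i j : Fin 3} : D.av i ≠ D.cv j := by
  intro h; injection h with h; injection h with h
  have h2 : (0 : Fin 3) = 2 := (Prod.ext_iff.mp h).2
  exact absurd h2 (by decide)
@[simp] lemma bv_ne_cv {i j : Fin 3} : D.bv i ≠ D.cv j := by
  intro h; injection h with h; injection h with h
  have h2 : (1 : Fin 3) = 2 := (Prod.ext_iff.mp h).2
  exact absurd h2 (by decide)
@[simp] lemma av_ne_uv {i : Fin 3} : D.av i ≠ D.uv := by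
  intro h; injection h with h; exact Sum.inl_ne_inr h
@[simp] lemma bv_ne_uv {i : Fin 3} : D.bv i ≠ D.uv := by
  intro h; injection h with h; exact Sum.inl_ne_inr h
@[simp] lemma cv_ne_uv {i : Fin 3} : D.cv i ≠ D.uv := by
  intro h; injection h with h; exact Sum.inl_ne_inr h
@[simp] lemma av_eq_av {i j : Fin 3} : D.av i = D.av j ↔ i = j := by
  constructor
  · intro h; injection h with h; injection h with h; exact (Prod.ext_iff.mp h).1
  · rintro rfl; rfl
@[simp] lemma bv_eq_bv {i j : Fin 3} : D.bv i = D.bv j ↔ i = j := by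
  constructor
  · intro h; injection h with h; injection h with h; exact (Prod.ext_iff.mp h).1
  · rintro rfl; rfl
@[simp] lemma cv_eq_cv {i j : Fin 3} : D.cv i = D.cv j ↔ i = j := by
  constructor
  · intro h; injection h with h; injection h with h; exact (Prod.ext_iff.mp h).1
  · rintro rfl; rfl

lemma hv_inj {i : Fin 3} {v w : D.HVert i} (h : D.hv v = D.hv w) : v = w := by
  have := Sum.inl.inj h
  exact eq_of_heq (Sigma.mk.inj_iff.mp this).2

lemma hv_eq_hv' {i j : Fin 3} {v : D.HVert i} {w : D.HVert j} (h : D.hv v = D.hv w) :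
    i = j := (Sigma.mk.inj_iff.mp (Sum.inl.inj h)).1

lemma adj_hv_hv {i : Fin 3} {a b : D.HVert i} :
    D.graph.Adj (D.hv a) (D.hv b) ↔ (D.G i).Adj a.1 b.1 := by
  constructor
  · rintro ⟨hne, h | h⟩ <;>
    · rcases h with ⟨j, v, w, hadj, h1, h2⟩ | ⟨j, h1, h2⟩ | ⟨j, h1, h2⟩ | ⟨j, h1, h2⟩ |
        ⟨j, h1, h2⟩ | ⟨j, h1, h2⟩ <;>
        first
          | exact absurd h1 (D.hv_ne_av _)
          | exact absurd h1 (D.hv_ne_bv _)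
          | exact absurd h1 (D.hv_ne_cv _)
          | (obtain rfl : i = j := D.hv_eq_hv' h1
             first
               | (rw [hv_inj D h1, hv_inj D h2]; exact hadj)
               | (rw [hv_inj D h1, hv_inj D h2]; exact hadj.symm))
  · intro h
    exact ⟨fun he => h.ne (congrArg Subtype.val (hv_inj D he)), Or.inl (Or.inl ⟨i, a, b, h, rfl, rfl⟩)⟩

lemma fin3_sub_one_ne_add_one (i : Fin 3) : i - 1 ≠ i + 1 := by revert i; decide

lemma hv_eq_x0v {i : Fin 3} {a : D.HVert i} (h : D.hv a = D.x0v i) : a.1 = D.x0 i :=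
  congrArg Subtype.val (hv_inj D h)
lemma hv_eq_x1v {i : Fin 3} {a : D.HVert i} (h : D.hv a = D.x1v i) : a.1 = D.x1 i :=
  congrArg Subtype.val (hv_inj D h)
lemma hv_eq_y0v {i : Fin 3} {a : D.HVert i} (h : D.hv a = D.y0v i) : a.1 = D.y0 i :=
  congrArg Subtype.val (hv_inj D h)
lemma hv_eq_y1v {i : Fin 3} {a : D.HVert i} (h : D.hv a = D.y1v i) : a.1 = D.y1 i :=
  congrArg Subtype.val (hv_inj D h)

lemma hv_idx_x0v {i j : Fin 3} {a : D.HVert i} (h : D.hv a = D.x0v j) : i = j :=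
  D.hv_eq_hv' h
lemma hv_idx_x1v {i j : Fin 3} {a : D.HVert i} (h : D.hv a = D.x1v j) : i = j :=
  D.hv_eq_hv' h
lemma hv_idx_y0v {i j : Fin 3} {a : D.HVert i} (h : D.hv a = D.y0v j) : i = j :=
  D.hv_eq_hv' h
lemma hv_idx_y1v {i j : Fin 3} {a : D.HVert i} (h : D.hv a = D.y1v j) : i = j :=
  D.hv_eq_hv' h

/-- Structure of neighbours of an `H i` vertex in the windmill graph. -/
lemma adj_hv_cases {i : Fin 3} {a : D.HVert i} {q : D.Vert}
    (h : D.graph.Adj (D.hv a) q) :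
    (∃ b : D.HVert i, q = D.hv b ∧ (D.G i).Adj a.1 b.1) ∨
    (a.1 = D.x0 i ∧ q = D.av (i - 1)) ∨ (a.1 = D.x1 i ∧ q = D.bv (i - 1)) ∨
    (a.1 = D.y0 i ∧ q = D.av (i + 1)) ∨ (a.1 = D.y1 i ∧ q = D.bv (i + 1)) := by
  obtain ⟨hne, h | h⟩ := h
  · rcases h with ⟨j, v, w, hadj, h1, h2⟩ | ⟨j, h1, h2⟩ | ⟨j, h1, h2⟩ | ⟨j, h1, h2⟩ |
      ⟨j, h1, h2⟩ | ⟨j, h1, h2⟩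
    · obtain rfl : i = j := D.hv_eq_hv' h1
      exact Or.inl ⟨w, h2, by rw [hv_inj D h1]; exact hadj⟩
    all_goals simp at h1
  · rcases h with ⟨j, v, w, hadj, h1, h2⟩ | ⟨j, h1, h2⟩ | ⟨j, h1, h2⟩ | ⟨j, h1, h2⟩ |
      ⟨j, h1, h2⟩ | ⟨j, h1, h2⟩
    · obtain rfl : i = j := D.hv_eq_hv' h2
      exact Or.inl ⟨v, h1, by rw [hv_inj D h2]; exact hadj.symm⟩
    · obtain rfl : j = i - 1 := by have := D.hv_idx_x0v h2; rw [this]; abel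
      rw [show i - 1 + 1 = i from by abel] at h2
      exact Or.inr (Or.inl ⟨D.hv_eq_x0v h2, h1⟩)
    · obtain rfl : j = i + 1 := by have := D.hv_idx_y0v h2; rw [this]; abel
      rw [show i + 1 - 1 = i from by abel] at h2
      exact Or.inr (Or.inr (Or.inr (Or.inl ⟨D.hv_eq_y0v h2, h1⟩)))
    · obtain rfl : j = i - 1 := by have := D.hv_idx_x1v h2; rw [this]; abel
      rw [show i - 1 + 1 = i from by abel] at h2
      exact Or.inr (Or.inr (Or.inl ⟨D.hv_eq_x1v h2, h1⟩))
    · obtain rfl : j = i + 1 := by have := D.hv_idx_y1v h2; rw [this]; abel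
      rw [show i + 1 - 1 = i from by abel] at h2
      exact Or.inr (Or.inr (Or.inr (Or.inr ⟨D.hv_eq_y1v h2, h1⟩)))
    · rcases h2 with h2 | h2 | h2 <;> simp at h2

lemma hset_mem_hv {i : Fin 3} (v : D.HVert i) : D.hv v ∈ D.Hset i := ⟨v, rfl⟩
lemma x0v_mem_Hset (i : Fin 3) : D.x0v i ∈ D.Hset i := ⟨_, rfl⟩
lemma x1v_mem_Hset (i : Fin 3) : D.x1v i ∈ D.Hset i := ⟨_, rfl⟩
lemma y0v_mem_Hset (i : Fin 3) : D.y0v i ∈ D.Hset i := ⟨_, rfl⟩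
lemma y1v_mem_Hset (i : Fin 3) : D.y1v i ∈ D.Hset i := ⟨_, rfl⟩
lemma av_not_mem_Hset {i j : Fin 3} : D.av j ∉ D.Hset i := by
  rintro ⟨v, hvv⟩; exact absurd hvv.symm (D.hv_ne_av v)
lemma bv_not_mem_Hset {i j : Fin 3} : D.bv j ∉ D.Hset i := by
  rintro ⟨v, hvv⟩; exact absurd hvv.symm (D.hv_ne_bv v)

lemma adj_av_x0v (i : Fin 3) : D.graph.Adj (D.av (i - 1)) (D.x0v i) := by
  refine ⟨(D.hv_ne_av _).symm, Or.inl (Or.inr (Or.inl ⟨i - 1, rfl, ?_⟩))⟩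
  rw [show i - 1 + 1 = i from by abel]
lemma adj_bv_x1v (i : Fin 3) : D.graph.Adj (D.bv (i - 1)) (D.x1v i) := by
  refine ⟨(D.hv_ne_bv _).symm, Or.inl (Or.inr (Or.inr (Or.inr (Or.inl ⟨i - 1, rfl, ?_⟩))))⟩
  rw [show i - 1 + 1 = i from by abel]
lemma adj_av_y0v (i : Fin 3) : D.graph.Adj (D.av (i + 1)) (D.y0v i) := by
  refine ⟨(D.hv_ne_av _).symm, Or.inl (Or.inr (Or.inr (Or.inl ⟨i + 1, rfl, ?_⟩)))⟩
  rw [show i + 1 - 1 = i from by abel]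
lemma adj_bv_y1v (i : Fin 3) : D.graph.Adj (D.bv (i + 1)) (D.y1v i) := by
  refine ⟨(D.hv_ne_bv _).symm,
    Or.inl (Or.inr (Or.inr (Or.inr (Or.inr (Or.inl ⟨i + 1, rfl, ?_⟩)))))⟩
  rw [show i + 1 - 1 = i from by abel]

lemma hv_eq_of_val {i : Fin 3} {a : D.HVert i} (h : a.1 = D.x0 i) : D.hv a = D.x0v i := by
  unfold x0v; congr 1; exact Subtype.ext h
lemma hv_eq_of_val_x1 {i : Fin 3} {a : D.HVert i} (h : a.1 = D.x1 i) : D.hv a = D.x1v i := by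
  unfold x1v; congr 1; exact Subtype.ext h
lemma hv_eq_of_val_y0 {i : Fin 3} {a : D.HVert i} (h : a.1 = D.y0 i) : D.hv a = D.y0v i := by
  unfold y0v; congr 1; exact Subtype.ext h
lemma hv_eq_of_val_y1 {i : Fin 3} {a : D.HVert i} (h : a.1 = D.y1 i) : D.hv a = D.y1v i := by
  unfold y1v; congr 1; exact Subtype.ext h

lemma edgesBetween_Aminus (i : Fin 3) :
    edgesBetween D.graph (D.Hset i) (D.Aset (i - 1)) =
      {s(D.x0v i, D.av (i - 1)), s(D.x1v i, D.bv (i - 1))} := by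
  ext e
  constructor
  · rintro ⟨p, q, hadj, ⟨v, rfl⟩, hq, rfl⟩
    rcases D.adj_hv_cases hadj with ⟨b, rfl, _⟩ | ⟨hval, rfl⟩ | ⟨hval, rfl⟩ |
        ⟨hval, rfl⟩ | ⟨hval, rfl⟩
    · rcases hq with hq | hq | hq <;> simp at hq
    · exact Or.inl (by rw [D.hv_eq_of_val hval])
    · refine Or.inr ?_
      rw [D.hv_eq_of_val_x1 hval]; exact Set.mem_singleton _
    · rcases hq with hq | hq | hq
      · exact absurd (D.av_eq_av.mp hq) (fin3_sub_one_ne_add_one i).symm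
      · exact absurd hq D.av_ne_bv
      · exact absurd hq D.av_ne_cv
    · rcases hq with hq | hq | hq
      · exact absurd hq.symm D.av_ne_bv
      · exact absurd (D.bv_eq_bv.mp hq) (fin3_sub_one_ne_add_one i).symm
      · exact absurd hq D.bv_ne_cv
  · rintro (rfl | rfl)
    · exact ⟨D.x0v i, D.av (i - 1), (D.adj_av_x0v i).symm, D.x0v_mem_Hset i, Or.inl rfl, rfl⟩
    · exact ⟨D.x1v i, D.bv (i - 1), (D.adj_bv_x1v i).symm, D.x1v_mem_Hset i,
        Or.inr (Or.inl rfl), rfl⟩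

lemma edgesBetween_Aplus (i : Fin 3) :
    edgesBetween D.graph (D.Hset i) (D.Aset (i + 1)) =
      {s(D.y0v i, D.av (i + 1)), s(D.y1v i, D.bv (i + 1))} := by
  ext e
  constructor
  · rintro ⟨p, q, hadj, ⟨v, rfl⟩, hq, rfl⟩
    rcases D.adj_hv_cases hadj with ⟨b, rfl, _⟩ | ⟨hval, rfl⟩ | ⟨hval, rfl⟩ |
        ⟨hval, rfl⟩ | ⟨hval, rfl⟩
    · rcases hq with hq | hq | hq <;> simp at hq
    · rcases hq with hq | hq | hq
      · exact absurd (D.av_eq_av.mp hq) (fin3_sub_one_ne_add_one i)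
      · exact absurd hq D.av_ne_bv
      · exact absurd hq D.av_ne_cv
    · rcases hq with hq | hq | hq
      · exact absurd hq.symm D.av_ne_bv
      · exact absurd (D.bv_eq_bv.mp hq) (fin3_sub_one_ne_add_one i)
      · exact absurd hq D.bv_ne_cv
    · exact Or.inl (by rw [D.hv_eq_of_val_y0 hval])
    · refine Or.inr ?_
      rw [D.hv_eq_of_val_y1 hval]; exact Set.mem_singleton _
  · rintro (rfl | rfl)
    · exact ⟨D.y0v i, D.av (i + 1), (D.adj_av_y0v i).symm, D.y0v_mem_Hset i, Or.inl rfl, rfl⟩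
    · exact ⟨D.y1v i, D.bv (i + 1), (D.adj_bv_y1v i).symm, D.y1v_mem_Hset i,
        Or.inr (Or.inl rfl), rfl⟩

lemma edgeBoundary_Hset (i : Fin 3) :
    edgeBoundary D.graph (D.Hset i) =
      {s(D.x0v i, D.av (i - 1)), s(D.x1v i, D.bv (i - 1)),
       s(D.y0v i, D.av (i + 1)), s(D.y1v i, D.bv (i + 1))} := by
  ext e
  constructor
  · rintro ⟨p, q, hadj, ⟨v, rfl⟩, hq, rfl⟩
    rcases D.adj_hv_cases hadj with ⟨b, rfl, _⟩ | ⟨hval, rfl⟩ | ⟨hval, rfl⟩ |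
        ⟨hval, rfl⟩ | ⟨hval, rfl⟩
    · exact absurd (D.hset_mem_hv b) hq
    · exact Or.inl (by rw [D.hv_eq_of_val hval])
    · exact Or.inr (Or.inl (by rw [D.hv_eq_of_val_x1 hval]))
    · exact Or.inr (Or.inr (Or.inl (by rw [D.hv_eq_of_val_y0 hval])))
    · refine Or.inr (Or.inr (Or.inr ?_))
      rw [D.hv_eq_of_val_y1 hval]; exact Set.mem_singleton _
  · rintro (rfl | rfl | rfl | rfl)
    · exact ⟨D.x0v i, D.av (i - 1), (D.adj_av_x0v i).symm, D.x0v_mem_Hset i,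
        D.av_not_mem_Hset, rfl⟩
    · exact ⟨D.x1v i, D.bv (i - 1), (D.adj_bv_x1v i).symm, D.x1v_mem_Hset i,
        D.bv_not_mem_Hset, rfl⟩
    · exact ⟨D.y0v i, D.av (i + 1), (D.adj_av_y0v i).symm, D.y0v_mem_Hset i,
        D.av_not_mem_Hset, rfl⟩
    · exact ⟨D.y1v i, D.bv (i + 1), (D.adj_bv_y1v i).symm, D.y1v_mem_Hset i,
        D.bv_not_mem_Hset, rfl⟩

lemma ncard_one_pair {α : Type*} {s : Set α} {a b : α} (hab : a ≠ b)
    (h : (s ∩ {a, b}).ncard = 1) :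
    (a ∈ s ∧ b ∉ s) ∨ (b ∈ s ∧ a ∉ s) := by
  by_cases ha : a ∈ s <;> by_cases hb : b ∈ s
  · exfalso
    have he : s ∩ {a, b} = {a, b} :=
      Set.inter_eq_self_of_subset_right (by rintro x (rfl | rfl) <;> assumption)
    rw [he, Set.ncard_pair hab] at h
    omega
  · exact Or.inl ⟨ha, hb⟩
  · exact Or.inr ⟨hb, ha⟩
  · exfalso
    have he : s ∩ {a, b} = ∅ := by
      ext z
      simp only [Set.mem_inter_iff, Set.mem_insert_iff, Set.mem_singleton_iff,
        Set.mem_empty_iff_false, iff_false, not_and]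
      rintro hz (rfl | rfl) <;> contradiction
    rw [he, Set.ncard_empty] at h
    omega

lemma ncard_zero_inter {α : Type*} {s t : Set α} (ht : t.Finite)
    (h : (s ∩ t).ncard = 0) {x : α} (hx : x ∈ t) : x ∉ s := by
  intro hs
  rw [Set.ncard_eq_zero (ht.inter_of_right s)] at h
  exact absurd h (Set.nonempty_iff_ne_empty.mp ⟨x, hs, hx⟩)

/-- The boundary edges as propositions on a subgraph. -/
def Pe (i : Fin 3) (M : D.graph.Subgraph) : Prop := M.Adj (D.av (i - 1)) (D.x0v i)
def Qe (i : Fin 3) (M : D.graph.Subgraph) : Prop := M.Adj (D.bv (i - 1)) (D.x1v i)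
def Re (i : Fin 3) (M : D.graph.Subgraph) : Prop := M.Adj (D.av (i + 1)) (D.y0v i)
def Se (i : Fin 3) (M : D.graph.Subgraph) : Prop := M.Adj (D.bv (i + 1)) (D.y1v i)

lemma e1_ne_e2 (i : Fin 3) : s(D.x0v i, D.av (i - 1)) ≠ s(D.x1v i, D.bv (i - 1)) := by
  intro h
  rcases Sym2.eq_iff.mp h with ⟨h1, h2⟩ | ⟨h1, h2⟩
  · exact absurd h2 D.av_ne_bv
  · exact absurd h1 (D.hv_ne_bv _)

lemma e3_ne_e4 (i : Fin 3) : s(D.y0v i, D.av (i + 1)) ≠ s(D.y1v i, D.bv (i + 1)) := by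
  intro h
  rcases Sym2.eq_iff.mp h with ⟨h1, h2⟩ | ⟨h1, h2⟩
  · exact absurd h2 D.av_ne_bv
  · exact absurd h1 (D.hv_ne_bv _)

lemma type0_facts {i : Fin 3} {M : D.graph.Subgraph} (ht : D.Type0On M.edgeSet i) :
    ¬D.Pe i M ∧ ¬D.Qe i M ∧ ¬D.Re i M ∧ ¬D.Se i M := by
  unfold Type0On at ht
  rw [D.edgeBoundary_Hset i] at ht
  have hfin : ({s(D.x0v i, D.av (i - 1)), s(D.x1v i, D.bv (i - 1)),
      s(D.y0v i, D.av (i + 1)), s(D.y1v i, D.bv (i + 1))} : Set (Sym2 D.Vert)).Finite :=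
    (((Set.finite_singleton _).insert _).insert _).insert _
  refine ⟨fun hp => ?_, fun hp => ?_, fun hp => ?_, fun hp => ?_⟩
  · exact ncard_zero_inter hfin ht (by left; rfl) (Subgraph.mem_edgeSet.mpr hp.symm)
  · exact ncard_zero_inter hfin ht (by right; left; rfl) (Subgraph.mem_edgeSet.mpr hp.symm)
  · exact ncard_zero_inter hfin ht (by right; right; left; rfl)
      (Subgraph.mem_edgeSet.mpr hp.symm)
  · exact ncard_zero_inter hfin ht (by right; right; right; rfl)
      (Subgraph.mem_edgeSet.mpr hp.symm)

lemma type1_facts {i : Fin 3} {M : D.graph.Subgraph} (ht : D.Type1On M.edgeSet i) :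
    ((D.Pe i M ∧ ¬D.Qe i M) ∨ (D.Qe i M ∧ ¬D.Pe i M)) ∧
    ((D.Re i M ∧ ¬D.Se i M) ∨ (D.Se i M ∧ ¬D.Re i M)) := by
  obtain ⟨h1, h2⟩ := ht
  rw [D.edgesBetween_Aminus i] at h1
  rw [D.edgesBetween_Aplus i] at h2
  constructor
  · rcases ncard_one_pair (D.e1_ne_e2 i) h1 with ⟨ha, hb⟩ | ⟨ha, hb⟩
    · exact Or.inl ⟨(Subgraph.mem_edgeSet.mp ha).symm,
        fun hq => hb (Subgraph.mem_edgeSet.mpr hq.symm)⟩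
    · exact Or.inr ⟨(Subgraph.mem_edgeSet.mp ha).symm,
        fun hq => hb (Subgraph.mem_edgeSet.mpr hq.symm)⟩
  · rcases ncard_one_pair (D.e3_ne_e4 i) h2 with ⟨ha, hb⟩ | ⟨ha, hb⟩
    · exact Or.inl ⟨(Subgraph.mem_edgeSet.mp ha).symm,
        fun hq => hb (Subgraph.mem_edgeSet.mpr hq.symm)⟩
    · exact Or.inr ⟨(Subgraph.mem_edgeSet.mp ha).symm,
        fun hq => hb (Subgraph.mem_edgeSet.mpr hq.symm)⟩

lemma Pe_iff {i : Fin 3} {M : D.graph.Subgraph} {a : D.HVert i} (h : a.1 = D.x0 i) :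
    D.Pe i M ↔ M.Adj (D.hv a) (D.av (i - 1)) := by
  rw [Pe, D.hv_eq_of_val h]; exact ⟨fun hm => hm.symm, fun hm => hm.symm⟩
lemma Qe_iff {i : Fin 3} {M : D.graph.Subgraph} {a : D.HVert i} (h : a.1 = D.x1 i) :
    D.Qe i M ↔ M.Adj (D.hv a) (D.bv (i - 1)) := by
  rw [Qe, D.hv_eq_of_val_x1 h]; exact ⟨fun hm => hm.symm, fun hm => hm.symm⟩
lemma Re_iff {i : Fin 3} {M : D.graph.Subgraph} {a : D.HVert i} (h : a.1 = D.y0 i) :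
    D.Re i M ↔ M.Adj (D.hv a) (D.av (i + 1)) := by
  rw [Re, D.hv_eq_of_val_y0 h]; exact ⟨fun hm => hm.symm, fun hm => hm.symm⟩
lemma Se_iff {i : Fin 3} {M : D.graph.Subgraph} {a : D.HVert i} (h : a.1 = D.y1 i) :
    D.Se i M ↔ M.Adj (D.hv a) (D.bv (i + 1)) := by
  rw [Se, D.hv_eq_of_val_y1 h]; exact ⟨fun hm => hm.symm, fun hm => hm.symm⟩

def HCp (i : Fin 3) (M : D.graph.Subgraph) (v w : D.V i) : Prop :=
  ∃ (h1 : v ≠ D.x i ∧ v ≠ D.y i) (h2 : w ≠ D.x i ∧ w ≠ D.y i),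
    M.Adj (D.hv ⟨v, h1⟩) (D.hv ⟨w, h2⟩)
def XCp (i : Fin 3) (M : D.graph.Subgraph) (v w : D.V i) : Prop :=
  v = D.x i ∧ ((w = D.x0 i ∧ D.Pe i M) ∨ (w = D.x1 i ∧ D.Qe i M))
def YCp (i : Fin 3) (M : D.graph.Subgraph) (v w : D.V i) : Prop :=
  v = D.y i ∧ ((w = D.y0 i ∧ D.Re i M) ∨ (w = D.y1 i ∧ D.Se i M))
def ZCp (i : Fin 3) (M : D.graph.Subgraph) (v w : D.V i) : Prop :=
  v = D.x i ∧ w = D.y i ∧ ¬D.Pe i M ∧ ¬D.Qe i M ∧ ¬D.Re i M ∧ ¬D.Se i M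

/-- The perfect matching of `G i` induced by a perfect matching of the windmill
graph of type 0 or 1 on `H i`. -/
def restrict (i : Fin 3) (M : D.graph.Subgraph) : (D.G i).Subgraph where
  verts := Set.univ
  Adj v w := D.HCp i M v w ∨ D.HCp i M w v ∨ D.XCp i M v w ∨ D.XCp i M w v ∨
    D.YCp i M v w ∨ D.YCp i M w v ∨ D.ZCp i M v w ∨ D.ZCp i M w v
  adj_sub := by
    rintro v w (⟨h1, h2, hm⟩ | ⟨h1, h2, hm⟩ | ⟨rfl, ⟨rfl, _⟩ | ⟨rfl, _⟩⟩ |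
      ⟨rfl, ⟨rfl, _⟩ | ⟨rfl, _⟩⟩ | ⟨rfl, ⟨rfl, _⟩ | ⟨rfl, _⟩⟩ |
      ⟨rfl, ⟨rfl, _⟩ | ⟨rfl, _⟩⟩ | ⟨rfl, rfl, _⟩ | ⟨rfl, rfl, _⟩)
    · exact D.adj_hv_hv.mp (M.adj_sub hm)
    · exact (D.adj_hv_hv.mp (M.adj_sub hm)).symm
    · exact D.adj_xx0 i
    · exact D.adj_xx1 i
    · exact (D.adj_xx0 i).symm
    · exact (D.adj_xx1 i).symm
    · exact D.adj_yy0 i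
    · exact D.adj_yy1 i
    · exact (D.adj_yy0 i).symm
    · exact (D.adj_yy1 i).symm
    · exact D.adj_xy i
    · exact (D.adj_xy i).symm
  edge_vert := fun _ => Set.mem_univ _
  symm := by constructor; intro v w h; tauto

lemma restrict_adj_x {i : Fin 3} {M : D.graph.Subgraph} {w : D.V i}
    (h : (D.restrict i M).Adj (D.x i) w) :
    (w = D.x0 i ∧ D.Pe i M) ∨ (w = D.x1 i ∧ D.Qe i M) ∨
    (w = D.y i ∧ ¬D.Pe i M ∧ ¬D.Qe i M ∧ ¬D.Re i M ∧ ¬D.Se i M) := by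
  rcases h with ⟨h1, _⟩ | ⟨_, h2, _⟩ | ⟨_, h⟩ | ⟨rfl, h⟩ | ⟨h, _⟩ | ⟨rfl, h⟩ |
    ⟨_, rfl, h⟩ | ⟨rfl, h, _⟩
  · exact absurd rfl h1.1
  · exact absurd rfl h2.1
  · rcases h with ⟨rfl, hp⟩ | ⟨rfl, hp⟩
    · exact Or.inl ⟨rfl, hp⟩
    · exact Or.inr (Or.inl ⟨rfl, hp⟩)
  · rcases h with ⟨hx, _⟩ | ⟨hx, _⟩
    · exact absurd hx.symm (D.adj_xx0 i).ne'
    · exact absurd hx.symm (D.adj_xx1 i).ne'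
  · exact absurd h (D.adj_xy i).ne
  · rcases h with ⟨hx, _⟩ | ⟨hx, _⟩
    · exact absurd hx (D.y0_ne_x i).symm
    · exact absurd hx (D.y1_ne_x i).symm
  · exact Or.inr (Or.inr ⟨rfl, h⟩)
  · exact absurd h (D.adj_xy i).ne

lemma restrict_adj_y {i : Fin 3} {M : D.graph.Subgraph} {w : D.V i}
    (h : (D.restrict i M).Adj (D.y i) w) :
    (w = D.y0 i ∧ D.Re i M) ∨ (w = D.y1 i ∧ D.Se i M) ∨
    (w = D.x i ∧ ¬D.Pe i M ∧ ¬D.Qe i M ∧ ¬D.Re i M ∧ ¬D.Se i M) := by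
  rcases h with ⟨h1, _⟩ | ⟨_, h2, _⟩ | ⟨h, _⟩ | ⟨rfl, h⟩ | ⟨_, h⟩ | ⟨rfl, h⟩ |
    ⟨h, _⟩ | ⟨rfl, h, hfacts⟩
  · exact absurd rfl h1.2
  · exact absurd rfl h2.2
  · exact absurd h.symm (D.adj_xy i).ne
  · rcases h with ⟨hx, _⟩ | ⟨hx, _⟩
    · exact absurd hx (D.x0_ne_y i).symm
    · exact absurd hx (D.x1_ne_y i).symm
  · rcases h with ⟨rfl, hp⟩ | ⟨rfl, hp⟩
    · exact Or.inl ⟨rfl, hp⟩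
    · exact Or.inr (Or.inl ⟨rfl, hp⟩)
  · rcases h with ⟨hx, _⟩ | ⟨hx, _⟩
    · exact absurd hx.symm (D.adj_yy0 i).ne'
    · exact absurd hx.symm (D.adj_yy1 i).ne'
  · exact absurd h (D.adj_xy i).ne'
  · exact Or.inr (Or.inr ⟨rfl, hfacts⟩)

lemma restrict_adj_other {i : Fin 3} {M : D.graph.Subgraph} {v w : D.V i}
    (hvx : v ≠ D.x i) (hvy : v ≠ D.y i) (h : (D.restrict i M).Adj v w) :
    (∃ h2 : w ≠ D.x i ∧ w ≠ D.y i, M.Adj (D.hv ⟨v, hvx, hvy⟩) (D.hv ⟨w, h2⟩)) ∨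
    (w = D.x i ∧ ((v = D.x0 i ∧ D.Pe i M) ∨ (v = D.x1 i ∧ D.Qe i M))) ∨
    (w = D.y i ∧ ((v = D.y0 i ∧ D.Re i M) ∨ (v = D.y1 i ∧ D.Se i M))) := by
  rcases h with ⟨h1, h2, hm⟩ | ⟨h1, h2, hm⟩ | ⟨hx, _⟩ | ⟨rfl, h⟩ | ⟨hy, _⟩ | ⟨rfl, h⟩ |
    ⟨hx, _⟩ | ⟨_, hy, _⟩
  · exact Or.inl ⟨h2, hm⟩
  · exact Or.inl ⟨h1, hm.symm⟩
  · exact absurd hx hvx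
  · exact Or.inr (Or.inl ⟨rfl, h⟩)
  · exact absurd hy hvy
  · exact Or.inr (Or.inr ⟨rfl, h⟩)
  · exact absurd hx hvx
  · exact absurd hy hvy

lemma restrict_isPM {i : Fin 3} {M : D.graph.Subgraph} (hpm : M.IsPerfectMatching)
    (htype : D.Type0On M.edgeSet i ∨ D.Type1On M.edgeSet i) :
    (D.restrict i M).IsPerfectMatching := by
  rw [Subgraph.isPerfectMatching_iff]
  have hM := Subgraph.isPerfectMatching_iff.mp hpm
  have keyPQ : ¬(D.Pe i M ∧ D.Qe i M) := by
    rcases htype with ht | ht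
    · exact fun h => (D.type0_facts ht).1 h.1
    · rcases (D.type1_facts ht).1 with ⟨_, hq⟩ | ⟨_, hp⟩
      · exact fun h => hq h.2
      · exact fun h => hp h.1
  have keyRS : ¬(D.Re i M ∧ D.Se i M) := by
    rcases htype with ht | ht
    · exact fun h => (D.type0_facts ht).2.2.1 h.1
    · rcases (D.type1_facts ht).2 with ⟨_, hq⟩ | ⟨_, hp⟩
      · exact fun h => hq h.2
      · exact fun h => hp h.1
  have keyX : ¬D.Pe i M → ¬D.Qe i M → (¬D.Re i M ∧ ¬D.Se i M) := by
    intro hp hq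
    rcases htype with ht | ht
    · exact ⟨(D.type0_facts ht).2.2.1, (D.type0_facts ht).2.2.2⟩
    · rcases (D.type1_facts ht).1 with ⟨h, _⟩ | ⟨h, _⟩
      · exact absurd h hp
      · exact absurd h hq
  have keyY : ¬D.Re i M → ¬D.Se i M → (¬D.Pe i M ∧ ¬D.Qe i M) := by
    intro hr hs
    rcases htype with ht | ht
    · exact ⟨(D.type0_facts ht).1, (D.type0_facts ht).2.1⟩
    · rcases (D.type1_facts ht).2 with ⟨h, _⟩ | ⟨h, _⟩
      · exact absurd h hr
      · exact absurd h hs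
  intro v
  by_cases hvx : v = D.x i
  · subst hvx
    by_cases hP : D.Pe i M
    · refine ⟨D.x0 i, Or.inr (Or.inr (Or.inl ⟨rfl, Or.inl ⟨rfl, hP⟩⟩)), ?_⟩
      intro w' hw'
      rcases D.restrict_adj_x hw' with ⟨rfl, _⟩ | ⟨rfl, hQ⟩ | ⟨rfl, hfacts⟩
      · rfl
      · exact absurd ⟨hP, hQ⟩ keyPQ
      · exact absurd hP hfacts.1
    · by_cases hQ : D.Qe i M
      · refine ⟨D.x1 i, Or.inr (Or.inr (Or.inl ⟨rfl, Or.inr ⟨rfl, hQ⟩⟩)), ?_⟩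
        intro w' hw'
        rcases D.restrict_adj_x hw' with ⟨rfl, hP'⟩ | ⟨rfl, _⟩ | ⟨rfl, hfacts⟩
        · exact absurd hP' hP
        · rfl
        · exact absurd hQ hfacts.2.1
      · obtain ⟨hR, hS⟩ := keyX hP hQ
        refine ⟨D.y i, Or.inr (Or.inr (Or.inr (Or.inr (Or.inr (Or.inr
          (Or.inl ⟨rfl, rfl, hP, hQ, hR, hS⟩)))))), ?_⟩
        intro w' hw'
        rcases D.restrict_adj_x hw' with ⟨rfl, hP'⟩ | ⟨rfl, hQ'⟩ | ⟨rfl, _⟩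
        · exact absurd hP' hP
        · exact absurd hQ' hQ
        · rfl
  · by_cases hvy : v = D.y i
    · subst hvy
      by_cases hR : D.Re i M
      · refine ⟨D.y0 i, Or.inr (Or.inr (Or.inr (Or.inr (Or.inl ⟨rfl, Or.inl ⟨rfl, hR⟩⟩)))), ?_⟩
        intro w' hw'
        rcases D.restrict_adj_y hw' with ⟨rfl, _⟩ | ⟨rfl, hS⟩ | ⟨rfl, hfacts⟩
        · rfl
        · exact absurd ⟨hR, hS⟩ keyRS
        · exact absurd hR hfacts.2.2.1
      · by_cases hS : D.Se i M
        · refine ⟨D.y1 i, Or.inr (Or.inr (Or.inr (Or.inr (Or.inl ⟨rfl, Or.inr ⟨rfl, hS⟩⟩)))), ?_⟩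
          intro w' hw'
          rcases D.restrict_adj_y hw' with ⟨rfl, hR'⟩ | ⟨rfl, _⟩ | ⟨rfl, hfacts⟩
          · exact absurd hR' hR
          · rfl
          · exact absurd hS hfacts.2.2.2
        · obtain ⟨hP, hQ⟩ := keyY hR hS
          refine ⟨D.x i, Or.inr (Or.inr (Or.inr (Or.inr (Or.inr (Or.inr
            (Or.inr ⟨rfl, rfl, hP, hQ, hR, hS⟩)))))), ?_⟩
          intro w' hw'
          rcases D.restrict_adj_y hw' with ⟨rfl, hR'⟩ | ⟨rfl, hS'⟩ | ⟨rfl, _⟩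
          · exact absurd hR' hR
          · exact absurd hS' hS
          · rfl
    · obtain ⟨q, hq, huq⟩ := hM (D.hv ⟨v, hvx, hvy⟩)
      rcases D.adj_hv_cases (M.adj_sub hq) with ⟨b, hqe, _⟩ | ⟨hval, hqe⟩ | ⟨hval, hqe⟩ |
        ⟨hval, hqe⟩ | ⟨hval, hqe⟩ <;> subst hqe
      · refine ⟨b.1, Or.inl ⟨⟨hvx, hvy⟩, b.2, hq⟩, ?_⟩
        intro w' hw'
        rcases D.restrict_adj_other hvx hvy hw' with ⟨h2, hm⟩ | ⟨rfl, ⟨hv0, hPm⟩ | ⟨hv1, hQm⟩⟩ |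
          ⟨rfl, ⟨hv0, hRm⟩ | ⟨hv1, hSm⟩⟩
        · exact congrArg Subtype.val (hv_inj D (huq _ hm))
        · exact absurd (huq _ ((D.Pe_iff hv0).mp hPm)).symm (D.hv_ne_av b)
        · exact absurd (huq _ ((D.Qe_iff hv1).mp hQm)).symm (D.hv_ne_bv b)
        · exact absurd (huq _ ((D.Re_iff hv0).mp hRm)).symm (D.hv_ne_av b)
        · exact absurd (huq _ ((D.Se_iff hv1).mp hSm)).symm (D.hv_ne_bv b)
      · refine ⟨D.x i, Or.inr (Or.inr (Or.inr (Or.inl ⟨rfl,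
          Or.inl ⟨hval, (D.Pe_iff hval).mpr hq⟩⟩))), ?_⟩
        intro w' hw'
        rcases D.restrict_adj_other hvx hvy hw' with ⟨h2, hm⟩ | ⟨rfl, _⟩ |
          ⟨rfl, ⟨hv0, hRm⟩ | ⟨hv1, hSm⟩⟩
        · exact absurd (huq _ hm) (D.hv_ne_av _)
        · rfl
        · exact absurd (D.av_eq_av.mp (huq _ ((D.Re_iff hv0).mp hRm)))
            (fin3_sub_one_ne_add_one i).symm
        · exact absurd (huq _ ((D.Se_iff hv1).mp hSm)).symm D.av_ne_bv
      · refine ⟨D.x i, Or.inr (Or.inr (Or.inr (Or.inl ⟨rfl,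
          Or.inr ⟨hval, (D.Qe_iff hval).mpr hq⟩⟩))), ?_⟩
        intro w' hw'
        rcases D.restrict_adj_other hvx hvy hw' with ⟨h2, hm⟩ | ⟨rfl, _⟩ |
          ⟨rfl, ⟨hv0, hRm⟩ | ⟨hv1, hSm⟩⟩
        · exact absurd (huq _ hm) (D.hv_ne_bv _)
        · rfl
        · exact absurd (huq _ ((D.Re_iff hv0).mp hRm)) D.av_ne_bv
        · exact absurd (D.bv_eq_bv.mp (huq _ ((D.Se_iff hv1).mp hSm)))
            (fin3_sub_one_ne_add_one i).symm
      · refine ⟨D.y i, Or.inr (Or.inr (Or.inr (Or.inr (Or.inr (Or.inl ⟨rfl,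
          Or.inl ⟨hval, (D.Re_iff hval).mpr hq⟩⟩))))), ?_⟩
        intro w' hw'
        rcases D.restrict_adj_other hvx hvy hw' with ⟨h2, hm⟩ | ⟨rfl, ⟨hv0, hPm⟩ | ⟨hv1, hQm⟩⟩ |
          ⟨rfl, _⟩
        · exact absurd (huq _ hm) (D.hv_ne_av _)
        · exact absurd (D.av_eq_av.mp (huq _ ((D.Pe_iff hv0).mp hPm)))
            (fin3_sub_one_ne_add_one i)
        · exact absurd (huq _ ((D.Qe_iff hv1).mp hQm)).symm D.av_ne_bv
        · rfl
      · refine ⟨D.y i, Or.inr (Or.inr (Or.inr (Or.inr (Or.inr (Or.inl ⟨rfl,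
          Or.inr ⟨hval, (D.Se_iff hval).mpr hq⟩⟩))))), ?_⟩
        intro w' hw'
        rcases D.restrict_adj_other hvx hvy hw' with ⟨h2, hm⟩ | ⟨rfl, ⟨hv0, hPm⟩ | ⟨hv1, hQm⟩⟩ |
          ⟨rfl, _⟩
        · exact absurd (huq _ hm) (D.hv_ne_bv _)
        · exact absurd (huq _ ((D.Pe_iff hv0).mp hPm)) D.av_ne_bv
        · exact absurd (D.bv_eq_bv.mp (huq _ ((D.Qe_iff hv1).mp hQm)))
            (fin3_sub_one_ne_add_one i)
        · rfl

lemma nbhd_x {i : Fin 3} (hfin : Finite (D.V i)) (hc : IsCubic (D.G i)) :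
    (D.G i).neighborSet (D.x i) = {D.y i, D.x0 i, D.x1 i} := by
  haveI := hfin
  have hsub : ({D.y i, D.x0 i, D.x1 i} : Set (D.V i)) ⊆ (D.G i).neighborSet (D.x i) := by
    rintro z (rfl | rfl | rfl)
    exacts [D.adj_xy i, D.adj_xx0 i, D.adj_xx1 i]
  have hy : D.y i ∉ ({D.x0 i, D.x1 i} : Set (D.V i)) := by
    rintro (h | h)
    · exact (D.x0_ne_y i) h.symm
    · exact (D.x1_ne_y i) h.symm
  have h3 : ({D.y i, D.x0 i, D.x1 i} : Set (D.V i)).ncard = 3 := by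
    rw [Set.ncard_insert_of_notMem hy ((Set.finite_singleton _).insert _),
      Set.ncard_pair (D.x0_ne_x1 i)]
  exact (Set.eq_of_subset_of_ncard_le hsub (by rw [h3, hc (D.x i)]) (Set.toFinite _)).symm

lemma nbhd_y {i : Fin 3} (hfin : Finite (D.V i)) (hc : IsCubic (D.G i)) :
    (D.G i).neighborSet (D.y i) = {D.x i, D.y0 i, D.y1 i} := by
  haveI := hfin
  have hsub : ({D.x i, D.y0 i, D.y1 i} : Set (D.V i)) ⊆ (D.G i).neighborSet (D.y i) := by
    rintro z (rfl | rfl | rfl)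
    exacts [(D.adj_xy i).symm, D.adj_yy0 i, D.adj_yy1 i]
  have hy : D.x i ∉ ({D.y0 i, D.y1 i} : Set (D.V i)) := by
    rintro (h | h)
    · exact (D.y0_ne_x i) h.symm
    · exact (D.y1_ne_x i) h.symm
  have h3 : ({D.x i, D.y0 i, D.y1 i} : Set (D.V i)).ncard = 3 := by
    rw [Set.ncard_insert_of_notMem hy ((Set.finite_singleton _).insert _),
      Set.ncard_pair (D.y0_ne_y1 i)]
  exact (Set.eq_of_subset_of_ncard_le hsub (by rw [h3, hc (D.y i)]) (Set.toFinite _)).symm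

theorem windmill_cover_restrict' (D : WindmillData) (hfin : ∀ i, Finite (D.V i))
    (hc : ∀ i, IsCubic (D.G i))
    (i : Fin 3) (k : ℕ) (M : Fin k → D.graph.Subgraph)
    (hpm : ∀ t, (M t).IsPerfectMatching)
    (hcov : (⋃ t, (M t).edgeSet) = D.graph.edgeSet)
    (htype : ∀ t, D.Type0On (M t).edgeSet i ∨ D.Type1On (M t).edgeSet i)
    (h0 : ∃ t, D.Type0On (M t).edgeSet i) :
    ∃ N : Fin k → (D.G i).Subgraph,
      (∀ t, (N t).IsPerfectMatching) ∧ (⋃ t, (N t).edgeSet) = (D.G i).edgeSet := by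
  classical
  refine ⟨fun t => D.restrict i (M t), fun t => D.restrict_isPM (hpm t) (htype t), ?_⟩
  have get : ∀ p q, D.graph.Adj p q → ∃ t, (M t).Adj p q := by
    intro p q h
    have hmem : s(p, q) ∈ ⋃ t, (M t).edgeSet := by
      rw [hcov]; exact h
    obtain ⟨st, ⟨t, rfl⟩, ht⟩ := hmem
    exact ⟨t, Subgraph.mem_edgeSet.mp ht⟩
  have hx_cases : ∀ w, (D.G i).Adj (D.x i) w → w = D.y i ∨ w = D.x0 i ∨ w = D.x1 i := by
    intro w hadj
    have : w ∈ (D.G i).neighborSet (D.x i) := hadj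
    rw [D.nbhd_x (hfin i) (hc i)] at this
    rcases this with h | h | h
    exacts [Or.inl h, Or.inr (Or.inl h), Or.inr (Or.inr h)]
  have hy_cases : ∀ w, (D.G i).Adj (D.y i) w → w = D.x i ∨ w = D.y0 i ∨ w = D.y1 i := by
    intro w hadj
    have : w ∈ (D.G i).neighborSet (D.y i) := hadj
    rw [D.nbhd_y (hfin i) (hc i)] at this
    rcases this with h | h | h
    exacts [Or.inl h, Or.inr (Or.inl h), Or.inr (Or.inr h)]
  have main : ∀ v w, (D.G i).Adj v w → ∃ t, (D.restrict i (M t)).Adj v w := by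
    intro v w hadj
    by_cases hvx : v = D.x i
    · subst hvx
      rcases hx_cases w hadj with rfl | rfl | rfl
      · obtain ⟨t, ht0⟩ := h0
        obtain ⟨f1, f2, f3, f4⟩ := D.type0_facts ht0
        exact ⟨t, Or.inr (Or.inr (Or.inr (Or.inr (Or.inr (Or.inr
          (Or.inl ⟨rfl, rfl, f1, f2, f3, f4⟩))))))⟩
      · obtain ⟨t, ht⟩ := get _ _ (D.adj_av_x0v i)
        exact ⟨t, Or.inr (Or.inr (Or.inl ⟨rfl, Or.inl ⟨rfl, ht⟩⟩))⟩
      · obtain ⟨t, ht⟩ := get _ _ (D.adj_bv_x1v i)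
        exact ⟨t, Or.inr (Or.inr (Or.inl ⟨rfl, Or.inr ⟨rfl, ht⟩⟩))⟩
    · by_cases hvy : v = D.y i
      · subst hvy
        rcases hy_cases w hadj with rfl | rfl | rfl
        · obtain ⟨t, ht0⟩ := h0
          obtain ⟨f1, f2, f3, f4⟩ := D.type0_facts ht0
          exact ⟨t, Or.inr (Or.inr (Or.inr (Or.inr (Or.inr (Or.inr
            (Or.inr ⟨rfl, rfl, f1, f2, f3, f4⟩))))))⟩
        · obtain ⟨t, ht⟩ := get _ _ (D.adj_av_y0v i)
          exact ⟨t, Or.inr (Or.inr (Or.inr (Or.inr (Or.inl ⟨rfl, Or.inl ⟨rfl, ht⟩⟩))))⟩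
        · obtain ⟨t, ht⟩ := get _ _ (D.adj_bv_y1v i)
          exact ⟨t, Or.inr (Or.inr (Or.inr (Or.inr (Or.inl ⟨rfl, Or.inr ⟨rfl, ht⟩⟩))))⟩
      · by_cases hwx : w = D.x i
        · subst hwx
          rcases hx_cases v hadj.symm with rfl | rfl | rfl
          · exact absurd rfl hvy
          · obtain ⟨t, ht⟩ := get _ _ (D.adj_av_x0v i)
            exact ⟨t, Or.inr (Or.inr (Or.inr (Or.inl ⟨rfl, Or.inl ⟨rfl, ht⟩⟩)))⟩
          · obtain ⟨t, ht⟩ := get _ _ (D.adj_bv_x1v i)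
            exact ⟨t, Or.inr (Or.inr (Or.inr (Or.inl ⟨rfl, Or.inr ⟨rfl, ht⟩⟩)))⟩
        · by_cases hwy : w = D.y i
          · subst hwy
            rcases hy_cases v hadj.symm with rfl | rfl | rfl
            · exact absurd rfl hvx
            · obtain ⟨t, ht⟩ := get _ _ (D.adj_av_y0v i)
              exact ⟨t, Or.inr (Or.inr (Or.inr (Or.inr (Or.inr
                (Or.inl ⟨rfl, Or.inl ⟨rfl, ht⟩⟩)))))⟩
            · obtain ⟨t, ht⟩ := get _ _ (D.adj_bv_y1v i)
              exact ⟨t, Or.inr (Or.inr (Or.inr (Or.inr (Or.inr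
                (Or.inl ⟨rfl, Or.inr ⟨rfl, ht⟩⟩)))))⟩
          · have hga : D.graph.Adj (D.hv ⟨v, hvx, hvy⟩) (D.hv ⟨w, hwx, hwy⟩) :=
              D.adj_hv_hv.mpr hadj
            obtain ⟨t, ht⟩ := get _ _ hga
            exact ⟨t, Or.inl ⟨⟨hvx, hvy⟩, ⟨hwx, hwy⟩, ht⟩⟩
  apply subset_antisymm
  · rintro e he
    obtain ⟨st, ⟨t, rfl⟩, ht⟩ := he
    induction e with
    | _ v w => exact ((D.G i).mem_edgeSet).mpr ((D.restrict i (M t)).adj_sub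
        (Subgraph.mem_edgeSet.mp ht))
  · rintro e he
    induction e with
    | _ v w =>
      obtain ⟨t, ht⟩ := main v w (((D.G i).mem_edgeSet).mp he)
      exact Set.mem_iUnion.mpr ⟨t, Subgraph.mem_edgeSet.mpr ht⟩

end WindmillData

/-- If the windmill graph `G` of cubic bridgeless graphs
`G 0, G 1, G 2` is covered by `k` perfect matchings, each of type 0 or type 1
on `H i` and at least one of type 0 on `H i`, then `G i` can be covered by `k`
perfect matchings. -/
theorem windmill_cover_restrict (D : WindmillData) (hfin : ∀ i, Finite (D.V i))
    (hc : ∀ i, IsCubic (D.G i)) (hb : ∀ i, IsBridgeless (D.G i))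
    (i : Fin 3) (k : ℕ) (M : Fin k → D.graph.Subgraph)
    (hpm : ∀ t, (M t).IsPerfectMatching)
    (hcov : (⋃ t, (M t).edgeSet) = D.graph.edgeSet)
    (htype : ∀ t, D.Type0On (M t).edgeSet i ∨ D.Type1On (M t).edgeSet i)
    (h0 : ∃ t, D.Type0On (M t).edgeSet i) :
    CoverByPM (D.G i) k := by
  obtain ⟨N, h1, h2⟩ := WindmillData.windmill_cover_restrict' D hfin hc i k M hpm hcov htype h0
  exact ⟨N, h1, h2⟩
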